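/- Let I be a finite nonempty type and ρUN, ρMIX : I → ℝ with ρUN i > 0 and ρMIX i > 0 for all i. Define g : (I → ℝ) × (I → ℝ) → ℝ by g (μ1, μ2) = (∑ i, ρMIX i * log (μ2 i * (1 − μ1 i))) + (∑ i, ρUN i * log (μ1 i * (1 − μ2 i))), and let D = {(μ1, μ2) | ∀ i, (0 < μ1 i ∧ μ1 i < 1) ∧ (0 < μ2 i ∧ μ2 i < 1)}. Define μ1* i = ρUN i / (ρUN i + ρMIX i) and μ2* i = ρMIX i / (ρUN i + ρMIX i). Then (μ1*, μ2*) ∈ D; g (μ1, μ2) ≤ g (μ1*, μ2*) for every (μ1, μ2) ∈ D, with equality only if (μ1, μ2) = (μ1*, μ2*); and μ1* i / μ2* i = ρUN i / ρMIX i for every i. -/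

import Mathlib

lemma key_lt (a b x : ℝ) (ha : 0 < a) (hb : 0 < b) (hx0 : 0 < x) (hx1 : x < 1)
    (hne : x ≠ a / (a + b)) :
    a * Real.log x + b * Real.log (1 - x) <
      a * Real.log (a / (a + b)) + b * Real.log (1 - a / (a + b)) := by
  have hs : 0 < a + b := by linarith
  have hxs0 : 0 < a / (a + b) := by positivity
  have hxs1 : a / (a + b) < 1 := by rw [div_lt_one hs]; linarith
  set u : ℝ := x / (a / (a + b)) with hu
  set v : ℝ := (1 - x) / (1 - a / (a + b)) with hv
  have hu0 : 0 < u := by positivity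
  have hv0 : 0 < v := by
    apply div_pos (by linarith) (by linarith)
  have hune : u ≠ 1 := by
    intro h
    rw [hu, div_eq_one_iff_eq hxs0.ne'] at h
    exact hne h
  have hvne : v ≠ 1 := by
    intro h
    apply hne
    rw [hv, div_eq_one_iff_eq (by linarith)] at h
    linarith
  have h1 : Real.log u < u - 1 := Real.log_lt_sub_one_of_pos hu0 hune
  have h2 : Real.log v < v - 1 := Real.log_lt_sub_one_of_pos hv0 hvne
  have e1 : Real.log u = Real.log x - Real.log (a / (a + b)) :=
    Real.log_div hx0.ne' hxs0.ne'
  have e2 : Real.log v = Real.log (1 - x) - Real.log (1 - a / (a + b)) :=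
    Real.log_div (by linarith) (by linarith)
  have huv : a * u + b * v = a + b := by
    rw [hu, hv]
    have h1s : (1 : ℝ) - a / (a + b) = b / (a + b) := by field_simp; ring
    rw [h1s]
    field_simp
    ring
  have hA : a * Real.log u < a * u - a := by nlinarith
  have hB : b * Real.log v < b * v - b := by nlinarith
  rw [e1] at hA
  rw [e2] at hB
  nlinarith

lemma key_le (a b x : ℝ) (ha : 0 < a) (hb : 0 < b) (hx0 : 0 < x) (hx1 : x < 1) :
    a * Real.log x + b * Real.log (1 - x) ≤
      a * Real.log (a / (a + b)) + b * Real.log (1 - a / (a + b)) := by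
  rcases eq_or_ne x (a / (a + b)) with h | h
  · rw [h]
  · exact (key_lt a b x ha hb hx0 hx1 h).le

/-- Proposition 3: the discriminator objective `g` has the unique maximizer
`(μ1*, μ2*)` over pairs of functions with values in `(0, 1)`, and the ratio of
the optimal solutions recovers the occupancy ratio `ρUN / ρMIX`. -/
theorem stmt_12 {I : Type*} [Fintype I] [Nonempty I]
    (ρUN ρMIX : I → ℝ) (hUN : ∀ i, ρUN i > 0) (hMIX : ∀ i, ρMIX i > 0)
    (g : (I → ℝ) × (I → ℝ) → ℝ)
    (hg : ∀ μ : (I → ℝ) × (I → ℝ),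
      g μ = (∑ i, ρMIX i * Real.log (μ.2 i * (1 - μ.1 i)))
          + (∑ i, ρUN i * Real.log (μ.1 i * (1 - μ.2 i))))
    (D : Set ((I → ℝ) × (I → ℝ)))
    (hD : D = {μ : (I → ℝ) × (I → ℝ) |
      ∀ i, (0 < μ.1 i ∧ μ.1 i < 1) ∧ (0 < μ.2 i ∧ μ.2 i < 1)})
    (μ1s μ2s : I → ℝ)
    (hμ1 : ∀ i, μ1s i = ρUN i / (ρUN i + ρMIX i))
    (hμ2 : ∀ i, μ2s i = ρMIX i / (ρUN i + ρMIX i)) :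
    (μ1s, μ2s) ∈ D ∧
    (∀ μ ∈ D, g μ ≤ g (μ1s, μ2s)) ∧
    (∀ μ ∈ D, g μ = g (μ1s, μ2s) → μ = (μ1s, μ2s)) ∧
    (∀ i, μ1s i / μ2s i = ρUN i / ρMIX i) := by
  have hs : ∀ i, 0 < ρUN i + ρMIX i := fun i => by
    have := hUN i; have := hMIX i; linarith
  have h1mem : ∀ i, 0 < μ1s i ∧ μ1s i < 1 := fun i => by
    rw [hμ1]
    constructor
    · exact div_pos (hUN i) (hs i)
    · rw [div_lt_one (hs i)]; have := hMIX i; linarith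
  have h2mem : ∀ i, 0 < μ2s i ∧ μ2s i < 1 := fun i => by
    rw [hμ2]
    constructor
    · exact div_pos (hMIX i) (hs i)
    · rw [div_lt_one (hs i)]; have := hUN i; linarith
  -- termwise function
  set T : ((I → ℝ) × (I → ℝ)) → I → ℝ := fun μ i =>
    ρMIX i * Real.log (μ.2 i * (1 - μ.1 i)) + ρUN i * Real.log (μ.1 i * (1 - μ.2 i))
    with hT
  have hsum : ∀ μ : (I → ℝ) × (I → ℝ), g μ = ∑ i, T μ i := by
    intro μ
    rw [hg, hT, Finset.sum_add_distrib]
  -- termwise split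
  have hsplit : ∀ (i : I) (x y : ℝ), 0 < x → x < 1 → 0 < y → y < 1 →
      ρMIX i * Real.log (y * (1 - x)) + ρUN i * Real.log (x * (1 - y)) =
        (ρUN i * Real.log x + ρMIX i * Real.log (1 - x)) +
        (ρMIX i * Real.log y + ρUN i * Real.log (1 - y)) := by
    intro i x y hx0 hx1 hy0 hy1
    rw [Real.log_mul hy0.ne' (by linarith), Real.log_mul hx0.ne' (by linarith)]
    ring
  have hstar1 : ∀ i, μ1s i = ρUN i / (ρUN i + ρMIX i) := hμ1
  have hstar2 : ∀ i, μ2s i = ρMIX i / (ρMIX i + ρUN i) := fun i => by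
    rw [hμ2, add_comm]
  have hterm_le : ∀ (μ : (I → ℝ) × (I → ℝ)),
      (∀ i, (0 < μ.1 i ∧ μ.1 i < 1) ∧ (0 < μ.2 i ∧ μ.2 i < 1)) →
      ∀ i, T μ i ≤ T (μ1s, μ2s) i := by
    intro μ hμ i
    obtain ⟨⟨hx0, hx1⟩, hy0, hy1⟩ := hμ i
    rw [hT]
    simp only
    rw [hsplit i _ _ hx0 hx1 hy0 hy1,
      hsplit i _ _ (h1mem i).1 (h1mem i).2 (h2mem i).1 (h2mem i).2,
      hstar1 i, hstar2 i]
    exact add_le_add (key_le _ _ _ (hUN i) (hMIX i) hx0 hx1)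
      (key_le _ _ _ (hMIX i) (hUN i) hy0 hy1)
  have hterm_lt : ∀ (μ : (I → ℝ) × (I → ℝ)),
      (∀ i, (0 < μ.1 i ∧ μ.1 i < 1) ∧ (0 < μ.2 i ∧ μ.2 i < 1)) →
      ∀ i, (μ.1 i ≠ μ1s i ∨ μ.2 i ≠ μ2s i) → T μ i < T (μ1s, μ2s) i := by
    intro μ hμ i hne
    obtain ⟨⟨hx0, hx1⟩, hy0, hy1⟩ := hμ i
    rw [hT]
    simp only
    rw [hsplit i _ _ hx0 hx1 hy0 hy1,
      hsplit i _ _ (h1mem i).1 (h1mem i).2 (h2mem i).1 (h2mem i).2,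
      hstar1 i, hstar2 i]
    rcases hne with h | h
    · exact add_lt_add_of_lt_of_le
        (key_lt _ _ _ (hUN i) (hMIX i) hx0 hx1 (by rw [← hstar1 i]; exact h))
        (key_le _ _ _ (hMIX i) (hUN i) hy0 hy1)
    · exact add_lt_add_of_le_of_lt
        (key_le _ _ _ (hUN i) (hMIX i) hx0 hx1)
        (key_lt _ _ _ (hMIX i) (hUN i) hy0 hy1 (by rw [← hstar2 i]; exact h))
  subst hD
  refine ⟨fun i => ⟨h1mem i, h2mem i⟩, ?_, ?_, ?_⟩
  · intro μ hμ
    rw [hsum, hsum]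
    exact Finset.sum_le_sum fun i _ => hterm_le μ hμ i
  · intro μ hμ heq
    by_contra hne
    have : ∃ i, μ.1 i ≠ μ1s i ∨ μ.2 i ≠ μ2s i := by
      by_contra h
      push_neg at h
      apply hne
      have h1 : μ.1 = μ1s := funext fun i => (h i).1
      have h2 : μ.2 = μ2s := funext fun i => (h i).2
      exact Prod.ext h1 h2
    obtain ⟨i, hi⟩ := this
    have hlt : g μ < g (μ1s, μ2s) := by
      rw [hsum, hsum]
      exact Finset.sum_lt_sum (fun j _ => hterm_le μ hμ j)
        ⟨i, Finset.mem_univ i, hterm_lt μ hμ i hi⟩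
    linarith [heq ▸ hlt]
  · intro i
    have hMne := (hMIX i).ne'
    have hsne := (hs i).ne'
    rw [hμ1, hμ2, div_div_div_cancel_right₀]
    exact hsne
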